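/- Let (P, ≤, ', ⊥, ⊤) be a bounded strongly modular poset with a complementation ' (i.e., U(x,x') = {⊤} and L(x,x') = {⊥} for all x). Define M(x,y) := L(U(x,y') ∪ {y}) and R(x,y) := L(U(L(x,y) ∪ {x'})). Then the operator divisibility identity M(R(x,y), x) = L(x,y) holds for all x, y ∈ P, where M(A, x) for a set A means L(U(A ∪ {x'}) ∪ {x}). -/
import Mathlib

lemma ULU {P : Type*} [PartialOrder P] (S : Set P) :
    upperBounds (lowerBounds (upperBounds S)) = upperBounds S := by
  apply Set.Subset.antisymm
  · intro u hu s hs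
    exact hu (fun v hv => hv hs)
  · intro u hu v hv
    exact hv hu

lemma LUL {P : Type*} [PartialOrder P] (S : Set P) :
    lowerBounds (upperBounds (lowerBounds S)) = lowerBounds S := by
  apply Set.Subset.antisymm
  · intro u hu v hv
    exact hu (fun w hw => hw hv)
  · intro u hu v hv
    exact hv hu

theorem stmt_8 {P : Type*} [PartialOrder P] [BoundedOrder P] (n : P → P)
    (h3 : ∀ x y z : P,
      lowerBounds (upperBounds {x, y} ∪ upperBounds {x, z}) =
        lowerBounds (upperBounds ({x} ∪ lowerBounds ({y} ∪ upperBounds {x, z}))))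
    (h4 : ∀ x y z : P,
      lowerBounds (upperBounds (lowerBounds {x, z} ∪ {y}) ∪ {z}) =
        lowerBounds (upperBounds (lowerBounds {x, z} ∪ lowerBounds {y, z})))
    (hU : ∀ x : P, upperBounds {x, n x} = {⊤})
    (hL : ∀ x : P, lowerBounds {x, n x} = {⊥}) :
    ∀ x y : P,
      lowerBounds
        (upperBounds
          (lowerBounds (upperBounds (lowerBounds {x, y} ∪ {n x})) ∪ {n x}) ∪ {x}) =
        lowerBounds {x, y} := by
  intro x y
  set B : Set P := lowerBounds {x, y} ∪ {n x} with hB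
  -- n x ∈ L(U(B)), so the union with {n x} collapses
  have hmem : n x ∈ lowerBounds (upperBounds B) := by
    intro u hu
    exact hu (Set.mem_union_right _ rfl)
  have hcollapse : lowerBounds (upperBounds B) ∪ {n x} = lowerBounds (upperBounds B) :=
    Set.union_eq_self_of_subset_right (Set.singleton_subset_iff.mpr hmem)
  rw [hcollapse, ULU]
  -- now goal: L(U(B) ∪ {x}) = L(x,y)
  have hpair : ({x, y} : Set P) = {y, x} := Set.pair_comm x y
  have h4' := h4 y (n x) x
  rw [← hpair] at h4'
  rw [hB, h4']
  have hLnx : lowerBounds ({n x, x} : Set P) = {⊥} := by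
    rw [Set.pair_comm]; exact hL x
  rw [hLnx]
  have hbot : upperBounds (lowerBounds ({x, y} : Set P) ∪ {⊥}) =
      upperBounds (lowerBounds ({x, y} : Set P)) := by
    rw [upperBounds_union]
    simp [upperBounds_singleton]
  rw [hbot, LUL]
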